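/- Let H be a complex inner product space and u a sequence in H. Then for the BDF2 operator D̂ defined by (D̂u)^n = (3/2)u^n - 2u^{n-1} + (1/2)u^{n-2}, and with ũ^{n+1} = 2u^n - u^{n-1} and second difference (D²u)^n = u^n - 2u^{n-1} + u^{n-2}, one has Re⟨u^n, (D̂u)^n⟩ = (1/4)(|u^n|² + |ũ^{n+1}|² - |u^{n-1}|² - |ũ^n|²) + (1/4)|(D²u)^n|² for all n ≥ 2. -/
import Mathlib


open scoped InnerProductSpace

/-- `Re⟨u^n, (D̂u)^n⟩ = (1/4)(|u^n|² + |ũ^{n+1}|² - |u^{n-1}|² - |ũ^n|²) + (1/4)|(D²u)^n|²`,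
where `D̂` is the BDF2 operator, `ũ^{n+1} = 2u^n - u^{n-1}` and `D²` is the second
backward difference. -/
theorem re_inner_u_bdf2 {H : Type*} [NormedAddCommGroup H] [InnerProductSpace ℂ H]
    (u : ℕ → H) (n : ℕ) (hn : 2 ≤ n) :
    (⟪u n, ((3 : ℂ) / 2) • u n - (2 : ℂ) • u (n - 1) + ((1 : ℂ) / 2) • u (n - 2)⟫_ℂ).re =
      (1 / 4) * (‖u n‖ ^ 2 + ‖(2 : ℂ) • u n - u (n - 1)‖ ^ 2
          - ‖u (n - 1)‖ ^ 2 - ‖(2 : ℂ) • u (n - 1) - u (n - 2)‖ ^ 2) +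
        (1 / 4) * ‖u n - (2 : ℂ) • u (n - 1) + u (n - 2)‖ ^ 2 := by
  set a := u n
  set b := u (n - 1)
  set c := u (n - 2)
  have h : ∀ x : H, ‖x‖ ^ 2 = (⟪x, x⟫_ℂ).re := fun x => by
    have := inner_self_eq_norm_sq (𝕜 := ℂ) x
    simpa using this.symm
  have hsym : ∀ x y : H, (⟪y, x⟫_ℂ).re = (⟪x, y⟫_ℂ).re := fun x y => by
    rw [← inner_conj_symm, Complex.conj_re]
  simp only [h, inner_sub_left, inner_sub_right, inner_add_left, inner_add_right,
    inner_smul_left, inner_smul_right, Complex.sub_re, Complex.add_re, Complex.mul_re]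
  norm_num
  rw [hsym b a, hsym c a, hsym c b]
  ring
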